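/- For every integer k ≥ 2 and n = v(G), there exists a connected graph G on n vertices with exactly ⌊n/(k+1)⌋ vertices v such that G − v contains a connected component of size exactly k (showing the bound ⌊v(G)/(k+1)⌋ is tight). -/

import Mathlib

open SimpleGraph

/-- The vertex-deleted subgraph `G - v`: the induced subgraph on the remaining vertices. -/
def deleteVert {V : Type*} (G : SimpleGraph V) (v : V) : SimpleGraph {w : V // w ≠ v} :=
  G.induce {w : V | w ≠ v}

/-- `G` contains a cycle. -/
def HasCycleG {V : Type*} (G : SimpleGraph V) : Prop :=
  ∃ (u : V) (c : G.Walk u u), c.IsCycle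

/-- `G` contains at least two distinct cycles (distinct as subgraphs,
i.e. with different edge sets). -/
def TwoCycles {V : Type*} (G : SimpleGraph V) : Prop :=
  ∃ (u v : V) (c : G.Walk u u) (c' : G.Walk v v),
    c.IsCycle ∧ c'.IsCycle ∧ ¬ (∀ e, e ∈ c.edges ↔ e ∈ c'.edges)

/-- `G` contains exactly one cycle: it has a cycle, and any two cycles are equal
as subgraphs (have the same edge set). -/
def Unicyclic {V : Type*} (G : SimpleGraph V) : Prop :=
  HasCycleG G ∧ ∀ (u v : V) (c : G.Walk u u) (c' : G.Walk v v),
    c.IsCycle → c'.IsCycle → ∀ e, e ∈ c.edges ↔ e ∈ c'.edges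

/-- `F` and `G` have at least `k` common cards, i.e. the multiset intersection of their
decks has size at least `k`: there are `k` distinct vertices of `F` and `k` distinct
vertices of `G` whose corresponding vertex-deleted subgraphs are pairwise isomorphic. -/
def CommonCards {V W : Type*} (F : SimpleGraph V) (G : SimpleGraph W) (k : ℕ) : Prop :=
  ∃ (f : Fin k ↪ V) (g : Fin k ↪ W),
    ∀ i, Nonempty (deleteVert F (f i) ≃g deleteVert G (g i))

namespace Stmt12Aux

/-- parent function for our tree -/
def pa (k x : ℕ) : ℕ := if x % (k+1) = 0 then x - (k+1) else x - 1

lemma pa_lt {k x : ℕ} (hx : x ≠ 0) : pa k x < x := by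
  unfold pa; split <;> omega

lemma pa_le {k x : ℕ} : pa k x ≤ x := by unfold pa; split <;> omega

lemma pa_zero (k : ℕ) : pa k 0 = 0 := by unfold pa; simp

/-- descendant relation: `v` occurs on the parent chain of `w` -/
def desc (k v w : ℕ) : Prop := ∃ m, (pa k)^[m] w = v

lemma desc_self (k v : ℕ) : desc k v v := ⟨0, rfl⟩

lemma desc_pa {k v w : ℕ} (h : desc k v (pa k w)) : desc k v w := by
  obtain ⟨m, hm⟩ := h
  exact ⟨m+1, by rw [Function.iterate_succ_apply]; exact hm⟩

lemma desc_of_ne {k v w : ℕ} (hw : w ≠ v) (h : desc k v w) : desc k v (pa k w) := by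
  obtain ⟨m, hm⟩ := h
  cases m with
  | zero => exact absurd hm hw
  | succ m => exact ⟨m, by rw [← Function.iterate_succ_apply]; exact hm⟩

lemma desc_zero {k v : ℕ} (h : desc k v 0) : v = 0 := by
  obtain ⟨m, hm⟩ := h
  rw [Function.iterate_fixed (pa_zero k)] at hm; exact hm.symm

/-- any multiple of K strictly above v is at least the next multiple -/
lemma base_ge {K v w : ℕ} (hK : 0 < K) (hw : w % K = 0) (hvw : v < w) :
    (v / K + 1) * K ≤ w := by
  have h1 : w / K * K = w := Nat.div_mul_cancel (Nat.dvd_of_mod_eq_zero hw)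
  have h2 : v / K < w / K := by
    by_contra h
    push_neg at h
    have h3 := Nat.mul_le_mul_right K h
    have h4 : v / K * K ≤ v := Nat.div_mul_le_self v K
    omega
  calc (v/K+1)*K ≤ (w/K)*K := Nat.mul_le_mul_right K h2
    _ = w := h1

lemma lt_next {K v : ℕ} (hK : 0 < K) : v < (v/K+1)*K := by
  have h1 := Nat.div_add_mod v K
  have h2 := Nat.mod_lt v hK
  have h3 : (v/K+1)*K = K*(v/K)+K := by ring
  omega

lemma next_le {K v : ℕ} (hK : 0 < K) (h : v % K ≠ 0) : (v/K+1)*K ≤ v + K - 1 := by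
  have h1 := Nat.div_add_mod v K
  have h2 := Nat.mod_lt v hK
  have h3 : (v/K+1)*K = K*(v/K)+K := by ring
  omega

lemma next_le' {K v : ℕ} : (v/K+1)*K ≤ v + K := by
  have h4 : v / K * K ≤ v := Nat.div_mul_le_self v K
  have h3 : (v/K+1)*K = (v/K)*K+K := by ring
  omega

/-- interior of an interval above a multiple of K contains no multiple of K -/
lemma not_base_of_lt_next {K v t : ℕ} (hK : 0 < K) (h1 : v < t) (h2 : t < (v/K+1)*K) :
    t % K ≠ 0 := fun h => absurd (base_ge hK h h1) (by omega)

/-- the graph: tree given by the parent function `pa` -/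
def gr (k n : ℕ) : SimpleGraph (Fin n) where
  Adj x y := (x:ℕ) ≠ (y:ℕ) ∧ (pa k x = y ∨ pa k y = x)
  symm := by
    constructor
    rintro x y ⟨h1, h2⟩
    exact ⟨h1.symm, h2.symm⟩
  loopless := by constructor; rintro x ⟨h1, -⟩; exact h1 rfl

lemma gr_adj {k n : ℕ} {x y : Fin n} :
    (gr k n).Adj x y ↔ (x:ℕ) ≠ (y:ℕ) ∧ (pa k (x:ℕ) = (y:ℕ) ∨ pa k (y:ℕ) = (x:ℕ)) :=
  Iff.rfl

lemma del_adj {k n : ℕ} {v : Fin n} {x y : {w : Fin n // w ≠ v}} :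
    (deleteVert (gr k n) v).Adj x y ↔ (gr k n).Adj x.1 y.1 := Iff.rfl

/-- the graph is connected -/
lemma gr_connected {k n : ℕ} (hn : 0 < n) : (gr k n).Connected := by
  rw [connected_iff]
  refine ⟨fun x y => ?_, ⟨⟨0, hn⟩⟩⟩
  have key : ∀ z : Fin n, (gr k n).Reachable z ⟨0, hn⟩ := by
    intro z
    obtain ⟨z, hz⟩ := z
    induction z using Nat.strong_induction_on with
    | _ z ih =>
      rcases Nat.eq_zero_or_pos z with h0 | h0
      · subst h0; rfl
      · have hlt : pa k z < z := pa_lt (by omega)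
        have hadj : (gr k n).Adj ⟨z, hz⟩ ⟨pa k z, by omega⟩ :=
          ⟨by simpa using hlt.ne', Or.inl rfl⟩
        exact hadj.reachable.trans (ih (pa k z) hlt (by omega))
  exact (key x).trans (key y).symm

section Fixed

variable {k n : ℕ} (v : Fin n)

/-- make a vertex of the deleted graph from a natural number -/
def mkS (x : ℕ) (hx : x < n) (hxv : x ≠ (v:ℕ)) : {w : Fin n // w ≠ v} :=
  ⟨⟨x, hx⟩, fun h => hxv (by rw [← h])⟩

@[simp] lemma mkS_val (x : ℕ) (hx : x < n) (hxv : x ≠ (v:ℕ)) :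
    ((mkS v x hx hxv : {w : Fin n // w ≠ v}) : Fin n).val = x := rfl

/-- reach 0 within the deleted graph, for non-descendants of v -/
lemma reach_zero (hn : 0 < n) (hv : (v:ℕ) ≠ 0) :
    ∀ (x : ℕ) (hx : x < n) (hxv : x ≠ (v:ℕ)), ¬ desc k (v:ℕ) x →
      (deleteVert (gr k n) v).Reachable (mkS v x hx hxv) (mkS v 0 hn (Ne.symm hv)) := by
  intro x
  induction x using Nat.strong_induction_on with
  | _ x ih =>
    intro hx hxv hd
    rcases Nat.eq_zero_or_pos x with h0 | h0
    · subst h0; rfl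
    · have hlt : pa k x < x := pa_lt (by omega)
      have hpv : pa k x ≠ (v:ℕ) := fun h => hd (desc_pa (h ▸ desc_self k _))
      have hd' : ¬ desc k (v:ℕ) (pa k x) := fun h => hd (desc_pa h)
      have hadj : (deleteVert (gr k n) v).Adj (mkS v x hx hxv)
          (mkS v (pa k x) (by omega) hpv) := ⟨by simpa using hlt.ne', Or.inl rfl⟩
      exact hadj.reachable.trans (ih (pa k x) hlt (by omega) hpv hd')

/-- reach v+1 within the deleted graph, along a run of non-multiples -/
lemma reach_succ (hv1 : (v:ℕ) + 1 < n) :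
    ∀ (x : ℕ) (hx : x < n) (hx1 : (v:ℕ) < x)
      (hnb : ∀ t, (v:ℕ) < t → t ≤ x → t % (k+1) ≠ 0),
      (deleteVert (gr k n) v).Reachable (mkS v x hx (by omega))
        (mkS v ((v:ℕ)+1) hv1 (by omega)) := by
  intro x
  induction x using Nat.strong_induction_on with
  | _ x ih =>
    intro hx hx1 hnb
    rcases eq_or_lt_of_le (Nat.succ_le_of_lt hx1) with h0 | h0
    · have he : mkS v x hx (by omega) = mkS v ((v:ℕ)+1) hv1 (by omega) := by
        apply Subtype.ext; apply Fin.ext; simpa using h0.symm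
      rw [he]
    · have hxb : x % (k+1) ≠ 0 := hnb x hx1 le_rfl
      have hpa : pa k x = x - 1 := by unfold pa; rw [if_neg hxb]
      have hadj : (deleteVert (gr k n) v).Adj (mkS v x hx (by omega))
          (mkS v (x-1) (by omega) (by omega)) := by
        refine ⟨by simp; omega, Or.inl ?_⟩
        simp [hpa]
      exact hadj.reachable.trans
        (ih (x-1) (by omega) (by omega) (by omega) (fun t ht1 ht2 => hnb t ht1 (by omega)))


lemma val_ne {x : {w : Fin n // w ≠ v}} : ((x : Fin n) : ℕ) ≠ (v : ℕ) :=
  fun h => x.2 (Fin.ext h)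

lemma desc_adj_iff {x y : {w : Fin n // w ≠ v}} (h : (deleteVert (gr k n) v).Adj x y) :
    (desc k (v:ℕ) ((x:Fin n):ℕ) ↔ desc k (v:ℕ) ((y:Fin n):ℕ)) := by
  obtain ⟨hne, hp⟩ := h
  have hx := val_ne v (x := x)
  have hy := val_ne v (x := y)
  rcases hp with hp | hp
  · exact ⟨fun h => hp ▸ desc_of_ne hx h, fun h => desc_pa (hp.symm ▸ h)⟩
  · exact ⟨fun h => desc_pa (hp.symm ▸ h), fun h => hp ▸ desc_of_ne hy h⟩

lemma desc_reach_iff {x y : {w : Fin n // w ≠ v}}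
    (h : (deleteVert (gr k n) v).Reachable x y) :
    (desc k (v:ℕ) ((x:Fin n):ℕ) ↔ desc k (v:ℕ) ((y:Fin n):ℕ)) := by
  obtain ⟨p⟩ := h
  induction p with
  | nil => exact Iff.rfl
  | cons hadj p ih => exact (desc_adj_iff v hadj).trans ih

lemma base_next {K v : ℕ} (hv : v % K = 0) : (v/K+1)*K = v + K := by
  have h1 : v / K * K = v := Nat.div_mul_cancel (Nat.dvd_of_mod_eq_zero hv)
  have h3 : (v/K+1)*K = v/K*K + K := by ring
  omega

/-- for a base `v`, interior tooth elements are non-multiples -/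
lemma tooth_nonbase (hb : (v:ℕ) % (k+1) = 0) {t : ℕ} (h1 : (v:ℕ) < t)
    (h2 : t < (v:ℕ) + (k+1)) : t % (k+1) ≠ 0 := by
  refine not_base_of_lt_next (by omega) h1 ?_
  rw [base_next hb]; omega

lemma tooth_adj (hb : (v:ℕ) % (k+1) = 0) {x y : {w : Fin n // w ≠ v}}
    (h : (deleteVert (gr k n) v).Adj x y)
    (ha : (v:ℕ) < ((x:Fin n):ℕ) ∧ ((x:Fin n):ℕ) ≤ (v:ℕ)+k) :
    (v:ℕ) < ((y:Fin n):ℕ) ∧ ((y:Fin n):ℕ) ≤ (v:ℕ)+k := by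
  obtain ⟨hne, hp⟩ := show (gr k n).Adj x.1 y.1 from h
  have hx := val_ne v (x := x)
  have hy := val_ne v (x := y)
  set A := ((x:Fin n):ℕ) with hA
  set B := ((y:Fin n):ℕ) with hB
  have hAmod : A % (k+1) ≠ 0 := tooth_nonbase v hb ha.1 (by omega)
  rcases hp with hp | hp
  · have : pa k A = A - 1 := by unfold pa; rw [if_neg hAmod]
    omega
  · by_cases hBmod : B % (k+1) = 0
    · exfalso
      have hpB : pa k B = B - (k+1) := by unfold pa; rw [if_pos hBmod]
      have hBA : A = B - (k+1) := by omega
      have hBpos : 0 < B := by omega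
      have hKB : (k+1) ∣ B := Nat.dvd_of_mod_eq_zero hBmod
      have hKle : (k+1) ≤ B := Nat.le_of_dvd hBpos hKB
      have : (k+1) ∣ A := hBA ▸ Nat.dvd_sub hKB dvd_rfl
      exact hAmod (Nat.mod_eq_zero_of_dvd this)
    · have hpB : pa k B = B - 1 := by unfold pa; rw [if_neg hBmod]
      have hBne : B ≠ (v:ℕ) + (k+1) := by
        intro h
        exact hBmod (by rw [h, Nat.add_mod_right, hb])
      omega

lemma tooth_reach_iff (hb : (v:ℕ) % (k+1) = 0) {x y : {w : Fin n // w ≠ v}}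
    (h : (deleteVert (gr k n) v).Reachable x y) :
    ((v:ℕ) < ((x:Fin n):ℕ) ∧ ((x:Fin n):ℕ) ≤ (v:ℕ)+k) ↔
      ((v:ℕ) < ((y:Fin n):ℕ) ∧ ((y:Fin n):ℕ) ≤ (v:ℕ)+k) := by
  obtain ⟨p⟩ := h
  induction p with
  | nil => exact Iff.rfl
  | cons hadj p ih =>
    exact (Iff.intro (tooth_adj v hb hadj) (tooth_adj v hb hadj.symm)).trans ih

lemma mkS_eq_self {x : {w : Fin n // w ≠ v}} (hx : ((x:Fin n):ℕ) < n)
    (hxv : ((x:Fin n):ℕ) ≠ (v:ℕ)) : mkS v ((x:Fin n):ℕ) hx hxv = x :=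
  Subtype.ext (Fin.ext rfl)

lemma good_supp (hb : (v:ℕ) % (k+1) = 0) (hg : (v:ℕ) + k < n) (hk : 1 ≤ k) :
    ((deleteVert (gr k n) v).connectedComponentMk
        (mkS v ((v:ℕ)+1) (by omega) (by omega))).supp
      = {x : {w : Fin n // w ≠ v} | (v:ℕ) < ((x:Fin n):ℕ) ∧ ((x:Fin n):ℕ) ≤ (v:ℕ)+k} := by
  ext x
  rw [ConnectedComponent.mem_supp_iff, ConnectedComponent.eq]
  constructor
  · intro h
    exact (tooth_reach_iff v hb h).mpr (by constructor <;> (simp only [mkS_val]; omega))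
  · intro hx
    obtain ⟨hx1, hx2⟩ := hx
    have hxlt : ((x:Fin n):ℕ) < n := (x:Fin n).isLt
    have hr := reach_succ v (by omega) ((x:Fin n):ℕ) hxlt hx1
      (fun t ht1 ht2 => tooth_nonbase v hb ht1 (by omega))
    exact mkS_eq_self v hxlt (val_ne v) ▸ hr

lemma ncard_val (s : Set {w : Fin n // w ≠ v}) :
    Nat.card s = (Fin.val '' (Subtype.val '' s)).ncard := by
  rw [Nat.card_coe_set_eq, Set.ncard_image_of_injective _ Fin.val_injective,
    Set.ncard_image_of_injective _ Subtype.val_injective]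

lemma good_card (hb : (v:ℕ) % (k+1) = 0) (hg : (v:ℕ) + k < n) (hk : 1 ≤ k) :
    ∃ c : (deleteVert (gr k n) v).ConnectedComponent, Nat.card c.supp = k := by
  refine ⟨(deleteVert (gr k n) v).connectedComponentMk
    (mkS v ((v:ℕ)+1) (by omega) (by omega)), ?_⟩
  rw [good_supp v hb hg hk, ncard_val]
  have himg : Fin.val '' (Subtype.val ''
      {x : {w : Fin n // w ≠ v} | (v:ℕ) < ((x:Fin n):ℕ) ∧ ((x:Fin n):ℕ) ≤ (v:ℕ)+k})
      = Set.Ioc (v:ℕ) ((v:ℕ)+k) := by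
    ext w
    constructor
    · rintro ⟨a, ⟨x, hx, rfl⟩, rfl⟩
      exact hx
    · intro hw
      rw [Set.mem_Ioc] at hw
      obtain ⟨hw1, hw2⟩ := hw
      refine ⟨(mkS v w (by omega) (by omega) : {w : Fin n // w ≠ v}).1,
        ⟨mkS v w (by omega) (by omega), ?_, rfl⟩, rfl⟩
      simp only [Set.mem_setOf_eq, mkS_val]
      omega
  rw [himg, Set.ncard_eq_toFinset_card', Set.toFinset_Ioc, Nat.card_Ioc]
  omega

/-- cut point bound: min of n and the next multiple of k+1 above v -/
def Mv (k n : ℕ) (v : Fin n) : ℕ := min n (((v:ℕ)/(k+1)+1)*(k+1))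

lemma nongood_ne_zero (hkn : 2*k < n)
    (hng : ¬ ((v:ℕ) % (k+1) = 0 ∧ (v:ℕ) + k < n)) : (v:ℕ) ≠ 0 := by
  intro h
  exact hng ⟨by rw [h]; exact Nat.zero_mod _, by omega⟩

lemma M_le (hng : ¬ ((v:ℕ) % (k+1) = 0 ∧ (v:ℕ) + k < n)) (hk1 : 1 ≤ k) :
    Mv k n v ≤ (v:ℕ) + k := by
  by_cases hb : (v:ℕ) % (k+1) = 0
  · have : ¬ ((v:ℕ) + k < n) := fun h => hng ⟨hb, h⟩
    have := min_le_left n (((v:ℕ)/(k+1)+1)*(k+1))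
    unfold Mv; omega
  · have := next_le (K := k+1) (v := (v:ℕ)) (by omega) hb
    have := min_le_right n (((v:ℕ)/(k+1)+1)*(k+1))
    unfold Mv; omega

lemma desc_iff_nongood (hk2 : 2 ≤ k) (hkn : 2*k < n)
    (hng : ¬ ((v:ℕ) % (k+1) = 0 ∧ (v:ℕ) + k < n)) :
    ∀ w, w < n → w ≠ (v:ℕ) → (desc k (v:ℕ) w ↔ ((v:ℕ) < w ∧ w < Mv k n v)) := by
  have hK : 0 < k+1 := by omega
  have hv0 : (v:ℕ) ≠ 0 := nongood_ne_zero v hkn hng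
  have hvB : (v:ℕ) < ((v:ℕ)/(k+1)+1)*(k+1) := lt_next hK
  have hBmod : (((v:ℕ)/(k+1)+1)*(k+1)) % (k+1) = 0 := Nat.mul_mod_left _ _
  have hMle : Mv k n v ≤ (v:ℕ) + k := M_le v hng (by omega)
  have hMdef : Mv k n v = min n (((v:ℕ)/(k+1)+1)*(k+1)) := rfl
  have hvn : (v:ℕ) < n := v.isLt
  intro w
  induction w using Nat.strong_induction_on with
  | _ w ih =>
    intro hw hwv
    constructor
    · intro hd
      rcases Nat.eq_zero_or_pos w with h0 | h0
      · subst h0; exact absurd (desc_zero hd) hv0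
      by_cases hwb : w % (k+1) = 0
      · have hpw : pa k w = w - (k+1) := by unfold pa; rw [if_pos hwb]
        have hwK : (k+1) ≤ w := Nat.le_of_dvd h0 (Nat.dvd_of_mod_eq_zero hwb)
        by_cases hp : pa k w = (v:ℕ)
        · exfalso
          have hvb : (v:ℕ) % (k+1) = 0 := by
            rw [← hp, hpw]
            exact Nat.mod_eq_zero_of_dvd
              (Nat.dvd_sub (Nat.dvd_of_mod_eq_zero hwb) dvd_rfl)
          have hle : ¬ ((v:ℕ) + k < n) := fun h => hng ⟨hvb, h⟩
          omega
        · exfalso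
          have hd' := desc_of_ne hwv hd
          have ihh := (ih (pa k w) (pa_lt (by omega)) (by omega) hp).mp hd'
          have hpb : pa k w % (k+1) = 0 := by
            rw [hpw]
            exact Nat.mod_eq_zero_of_dvd
              (Nat.dvd_sub (Nat.dvd_of_mod_eq_zero hwb) dvd_rfl)
          have := base_ge hK hpb ihh.1
          omega
      · have hpw : pa k w = w - 1 := by unfold pa; rw [if_neg hwb]
        have hwB : w ≠ ((v:ℕ)/(k+1)+1)*(k+1) := fun h => hwb (h ▸ hBmod)
        by_cases hp : pa k w = (v:ℕ)
        · refine ⟨by omega, by omega⟩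
        · have hd' := desc_of_ne hwv hd
          have ihh := (ih (pa k w) (pa_lt (by omega)) (by omega) hp).mp hd'
          refine ⟨by omega, by omega⟩
    · rintro ⟨h1, h2⟩
      have hwb : w % (k+1) ≠ 0 := not_base_of_lt_next hK h1 (by omega)
      have hpw : pa k w = w - 1 := by unfold pa; rw [if_neg hwb]
      rcases eq_or_lt_of_le (Nat.succ_le_of_lt h1) with h3 | h3
      · refine desc_pa (show desc k (v:ℕ) (pa k w) from ?_)
        rw [hpw, show w - 1 = (v:ℕ) from by omega]
        exact desc_self k _
      · have hrec := (ih (w-1) (by omega) (by omega) (by omega)).mpr ⟨by omega, by omega⟩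
        refine desc_pa (show desc k (v:ℕ) (pa k w) from ?_)
        rw [hpw]; exact hrec

lemma nongood_card (hk2 : 2 ≤ k) (hkn : 2*k < n)
    (hng : ¬ ((v:ℕ) % (k+1) = 0 ∧ (v:ℕ) + k < n))
    (c : (deleteVert (gr k n) v).ConnectedComponent) :
    Nat.card c.supp ≠ k := by
  have hK : 0 < k + 1 := by omega
  have hv0 : (v:ℕ) ≠ 0 := nongood_ne_zero v hkn hng
  have hvn : (v:ℕ) < n := v.isLt
  have hvB : (v:ℕ) < ((v:ℕ)/(k+1)+1)*(k+1) := lt_next hK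
  have hMdef : Mv k n v = min n (((v:ℕ)/(k+1)+1)*(k+1)) := rfl
  have hMle : Mv k n v ≤ (v:ℕ) + k := M_le v hng (by omega)
  have hchar := desc_iff_nongood v hk2 hkn hng
  obtain ⟨x0, hx0⟩ := c.exists_rep
  subst hx0
  show Nat.card ((deleteVert (gr k n) v).connectedComponentMk x0).supp ≠ k
  by_cases hd : desc k (v:ℕ) ((x0:Fin n):ℕ)
  · -- tail component, size < k
    have hx0' := (hchar _ (x0:Fin n).isLt (val_ne v)).mp hd
    have hv1 : (v:ℕ)+1 < n := by have := (x0:Fin n).isLt; omega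
    have hsupp : ((deleteVert (gr k n) v).connectedComponentMk x0).supp
        = {x : {w : Fin n // w ≠ v} | desc k (v:ℕ) ((x:Fin n):ℕ)} := by
      ext x
      rw [ConnectedComponent.mem_supp_iff, ConnectedComponent.eq]
      constructor
      · intro h
        exact (desc_reach_iff v h).mpr hd
      · intro hx
        have hx' := (hchar _ (x:Fin n).isLt (val_ne v)).mp hx
        have r1 := reach_succ v hv1 _ (x:Fin n).isLt hx'.1
          (fun t ht1 ht2 => not_base_of_lt_next hK ht1 (by omega))
        have r2 := reach_succ v hv1 _ (x0:Fin n).isLt hx0'.1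
          (fun t ht1 ht2 => not_base_of_lt_next hK ht1 (by omega))
        exact ((mkS_eq_self v _ _ ▸ r1).trans (mkS_eq_self v _ _ ▸ r2).symm)
    rw [hsupp, ncard_val]
    have himg : Fin.val '' (Subtype.val ''
        {x : {w : Fin n // w ≠ v} | desc k (v:ℕ) ((x:Fin n):ℕ)})
        = Set.Ioo (v:ℕ) (Mv k n v) := by
      ext w
      constructor
      · rintro ⟨a, ⟨x, hx, rfl⟩, rfl⟩
        exact Set.mem_Ioo.mpr ((hchar _ x.1.isLt (val_ne v)).mp hx)
      · intro hw
        rw [Set.mem_Ioo] at hw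
        obtain ⟨hw1, hw2⟩ := hw
        refine ⟨_, ⟨mkS v w (by omega) (by omega), ?_, rfl⟩, rfl⟩
        simp only [Set.mem_setOf_eq, mkS_val]
        exact (hchar w (by omega) (by omega)).mpr ⟨hw1, hw2⟩
    rw [himg, Set.ncard_eq_toFinset_card', Set.toFinset_Ioo, Nat.card_Ioo]
    omega
  · -- big component, size > k
    have hn0 : 0 < n := by omega
    have hsupp : ((deleteVert (gr k n) v).connectedComponentMk x0).supp
        = {x : {w : Fin n // w ≠ v} | ¬ desc k (v:ℕ) ((x:Fin n):ℕ)} := by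
      ext x
      rw [ConnectedComponent.mem_supp_iff, ConnectedComponent.eq]
      constructor
      · intro h hc
        exact hd ((desc_reach_iff v h).mp hc)
      · intro hx
        have r1 := reach_zero v hn0 hv0 _ (x:Fin n).isLt (val_ne v) hx
        have r2 := reach_zero v hn0 hv0 _ (x0:Fin n).isLt (val_ne v) hd
        exact ((mkS_eq_self v _ _ ▸ r1).trans (mkS_eq_self v _ _ ▸ r2).symm)
    rw [hsupp, ncard_val]
    have hsub : Set.Iio (v:ℕ) ∪ Set.Ico (Mv k n v) n ⊆ Fin.val '' (Subtype.val ''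
        {x : {w : Fin n // w ≠ v} | ¬ desc k (v:ℕ) ((x:Fin n):ℕ)}) := by
      intro w hw
      have hwn : w < n := by
        rcases hw with hw | hw
        · rw [Set.mem_Iio] at hw; omega
        · rw [Set.mem_Ico] at hw; omega
      have hwv : w ≠ (v:ℕ) := by
        rcases hw with hw | hw
        · rw [Set.mem_Iio] at hw; omega
        · rw [Set.mem_Ico] at hw; omega
      have hnd : ¬ desc k (v:ℕ) w := by
        intro h
        have := (hchar w hwn hwv).mp h
        rcases hw with hw | hw
        · rw [Set.mem_Iio] at hw; omega
        · rw [Set.mem_Ico] at hw; omega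
      refine ⟨_, ⟨mkS v w hwn hwv, ?_, rfl⟩, rfl⟩
      simp only [Set.mem_setOf_eq, mkS_val]
      exact hnd
    have hfin : (Fin.val '' (Subtype.val ''
        {x : {w : Fin n // w ≠ v} | ¬ desc k (v:ℕ) ((x:Fin n):ℕ)})).Finite :=
      Set.Finite.image _ (Set.Finite.image _ (Set.toFinite _))
    have hge := Set.ncard_le_ncard hsub hfin
    have hunion : (Set.Iio (v:ℕ) ∪ Set.Ico (Mv k n v) n).ncard
        = (v:ℕ) + (n - Mv k n v) := by
      rw [Set.ncard_union_eq (by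
        rw [Set.disjoint_left]
        intro w hw1 hw2
        rw [Set.mem_Iio] at hw1
        rw [Set.mem_Ico] at hw2
        omega) (Set.toFinite _) (Set.toFinite _)]
      rw [Set.ncard_eq_toFinset_card', Set.toFinset_Iio, Nat.card_Iio,
        Set.ncard_eq_toFinset_card', Set.toFinset_Ico, Nat.card_Ico]
    omega

end Fixed

lemma good_set_ncard (k n : ℕ) (hk2 : 2 ≤ k) (hkn : 2*k < n) :
    {v : Fin n | (v:ℕ) % (k+1) = 0 ∧ (v:ℕ) + k < n}.ncard = n / (k+1) := by
  classical
  have key : ∀ i, i < n/(k+1) → i*(k+1) + (k+1) ≤ n := by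
    intro i hi
    have h1 : (i+1)*(k+1) ≤ (n/(k+1))*(k+1) := Nat.mul_le_mul_right _ (by omega)
    have h2 : (n/(k+1))*(k+1) ≤ n := Nat.div_mul_le_self n (k+1)
    have h3 : (i+1)*(k+1) = i*(k+1)+(k+1) := by ring
    omega
  rw [Set.ncard_eq_toFinset_card', Set.toFinset_setOf, ← Finset.card_range (n/(k+1))]
  refine Finset.card_bij' (fun v _ => (v:ℕ)/(k+1)) (fun i hi => (⟨i*(k+1), by
      rw [Finset.mem_range] at hi
      have := key i hi
      omega⟩ : Fin n)) ?_ ?_ ?_ ?_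
  · intro v hv
    rw [Finset.mem_filter] at hv
    obtain ⟨-, h1, h2⟩ := hv
    rw [Finset.mem_range]
    have hb := base_next (K := k+1) (v := (v:ℕ)) h1
    have hle : ((v:ℕ)/(k+1)+1)*(k+1) ≤ n := by omega
    have := (Nat.le_div_iff_mul_le (by omega : 0 < k+1)).mpr hle
    show (v:ℕ)/(k+1) < n/(k+1)
    omega
  · intro i hi
    rw [Finset.mem_range] at hi
    rw [Finset.mem_filter]
    refine ⟨Finset.mem_univ _, ?_, ?_⟩
    · exact Nat.mul_mod_left _ _
    · have := key i hi
      show i*(k+1) + k < n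
      omega
  · intro v hv
    rw [Finset.mem_filter] at hv
    obtain ⟨-, h1, h2⟩ := hv
    apply Fin.ext
    exact Nat.div_mul_cancel (Nat.dvd_of_mod_eq_zero h1)
  · intro i hi
    show (i*(k+1))/(k+1) = i
    exact Nat.mul_div_cancel _ (by omega : 0 < k+1)

end Stmt12Aux

open Stmt12Aux in
/-- For every `k ≥ 2` (with `k < n/2` and the cycle in the construction
having at least 3 vertices), there is a connected graph `G` on `n` vertices with exactly
`⌊n/(k+1)⌋` vertices `v` such that `G - v` has a connected component of size exactly `k`;
so the bound `⌊v(G)/(k+1)⌋` is tight. -/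
theorem stmt12 (k n : ℕ) (hk : 2 ≤ k) (hkn : 2 * k < n)
    (hcyc : 3 ≤ n - k * (n / (k + 1))) :
    ∃ G : SimpleGraph (Fin n), G.Connected ∧
      {v : Fin n | ∃ c : (deleteVert G v).ConnectedComponent,
        Nat.card c.supp = k}.ncard = n / (k + 1) := by
  have hn0 : 0 < n := by omega
  refine ⟨gr k n, gr_connected hn0, ?_⟩
  have hset : {v : Fin n | ∃ c : (deleteVert (gr k n) v).ConnectedComponent,
      Nat.card c.supp = k} = {v : Fin n | (v:ℕ) % (k+1) = 0 ∧ (v:ℕ) + k < n} := by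
    ext v
    simp only [Set.mem_setOf_eq]
    constructor
    · rintro ⟨c, hc⟩
      by_contra hng
      exact nongood_card v hk hkn hng c hc
    · rintro ⟨h1, h2⟩
      exact good_card v h1 h2 (by omega)
  rw [hset]
  exact good_set_ncard k n hk hkn
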